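/- arXiv:1903.05175 — 9 statements merged into one kernel-verified Lean document; each statement's English description precedes it below -/
import Mathlib

section
/- In the Euclidean plane E := EuclideanSpace ℝ (Fin 2), let x be a line and A, B, C points. If A and B lie on the same side of x, and B and C lie on the same side of x, then A and C lie on the same side of x. -/
/-- `A` and `B` lie on the same side of the line `x`: neither lies on `x` and no
point of `x` is strictly between them. -/
def SameSideOfLine (x : AffineSubspace ℝ (EuclideanSpace ℝ (Fin 2)))
    (A B : EuclideanSpace ℝ (Fin 2)) : Prop :=
  A ∉ x ∧ B ∉ x ∧ ¬ ∃ P ∈ x, Sbtw ℝ A P B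

lemma sameSide_iff_sSameSide
    (x : AffineSubspace ℝ (EuclideanSpace ℝ (Fin 2)))
    (hx : Module.finrank ℝ x.direction = 1)
    (A B : EuclideanSpace ℝ (Fin 2)) :
    SameSideOfLine x A B ↔ x.SSameSide A B := by
  constructor
  · rintro ⟨hA, hB, hno⟩
    -- x is nonempty
    have hne : (x : Set (EuclideanSpace ℝ (Fin 2))).Nonempty := by
      rcases x.eq_bot_or_nonempty with h | h
      · exfalso; rw [h, AffineSubspace.direction_bot] at hx; simp at hx
      · exact h
    obtain ⟨p, hp⟩ := hne
    have hAp : A -ᵥ p ∉ x.direction := by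
      intro h
      exact hA ((AffineSubspace.vsub_right_mem_direction_iff_mem hp A).mp h)
    -- x.direction ⊔ span (A -ᵥ p) = ⊤
    have htop : x.direction ⊔ (Submodule.span ℝ {A -ᵥ p}) = ⊤ := by
      have hlt : x.direction < x.direction ⊔ (Submodule.span ℝ {A -ᵥ p}) := by
        refine lt_of_le_of_ne le_sup_left fun h => hAp ?_
        rw [h]
        exact Submodule.mem_sup_right (Submodule.mem_span_singleton_self _)
      have h1 : 1 < Module.finrank ℝ
          (x.direction ⊔ (Submodule.span ℝ {A -ᵥ p}) : Submodule ℝ _) := by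
        rw [← hx]
        exact Submodule.finrank_lt_finrank_of_lt hlt
      have h2 : Module.finrank ℝ (EuclideanSpace ℝ (Fin 2)) = 2 := by
        simp [finrank_euclideanSpace]
      apply Submodule.eq_top_of_finrank_eq
      have hle : Module.finrank ℝ
          (x.direction ⊔ (Submodule.span ℝ {A -ᵥ p}) : Submodule ℝ _) ≤ 2 := by
        exact le_trans (Submodule.finrank_le _) (le_of_eq h2)
      omega
    have hBmem : B -ᵥ p ∈ x.direction ⊔ (Submodule.span ℝ {A -ᵥ p}) := by
      rw [htop]; trivial
    rw [Submodule.mem_sup] at hBmem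
    obtain ⟨v, hv, w, hw, hvw⟩ := hBmem
    rw [Submodule.mem_span_singleton] at hw
    obtain ⟨t, rfl⟩ := hw
    have hBeq : B = t • (A -ᵥ p) +ᵥ (v +ᵥ p) := by
      simp only [vsub_eq_sub, vadd_eq_add] at hvw ⊢
      rw [← sub_add_cancel B p, ← hvw]
      abel
    have hvp : v +ᵥ p ∈ x := AffineSubspace.vadd_mem_of_mem_direction hv hp
    rcases lt_trichotomy t 0 with ht | ht | ht
    · exfalso
      have hopp : x.SOppSide A B := by
        rw [hBeq]
        exact AffineSubspace.sOppSide_smul_vsub_vadd_right hA hp hvp ht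
      obtain ⟨P, hP, hsbtw⟩ := hopp.exists_sbtw
      exact hno ⟨P, hP, hsbtw⟩
    · exfalso
      apply hB
      rw [hBeq, ht, zero_smul, zero_vadd]
      exact hvp
    · rw [hBeq]
      exact AffineSubspace.sSameSide_smul_vsub_vadd_right hA hp hvp ht
  · rintro h
    refine ⟨h.left_notMem, h.right_notMem, ?_⟩
    rintro ⟨P, hP, hsbtw⟩
    exact h.not_sOppSide (hsbtw.sOppSide_of_notMem_of_mem h.left_notMem hP)

theorem sameSide_trans
    (x : AffineSubspace ℝ (EuclideanSpace ℝ (Fin 2)))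
    (hx : Module.finrank ℝ x.direction = 1)
    (A B C : EuclideanSpace ℝ (Fin 2))
    (hAB : SameSideOfLine x A B) (hBC : SameSideOfLine x B C) :
    SameSideOfLine x A C := by
  rw [sameSide_iff_sSameSide x hx] at *
  exact hAB.trans hBC
end

section
/- In the Euclidean plane E := EuclideanSpace ℝ (Fin 2), let x be a line and A, B, C points. If A and B lie on opposite sides of x, and B and C lie on opposite sides of x, then A and C lie on the same side of x. -/
/-- `A` and `B` lie on opposite sides of the line `x`: neither lies on `x` and some
point of `x` is strictly between them. -/
def OppSideOfLine (x : AffineSubspace ℝ (EuclideanSpace ℝ (Fin 2)))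
    (A B : EuclideanSpace ℝ (Fin 2)) : Prop :=
  A ∉ x ∧ B ∉ x ∧ ∃ P ∈ x, Sbtw ℝ A P B

theorem oppSide_oppSide_sameSide
    (x : AffineSubspace ℝ (EuclideanSpace ℝ (Fin 2)))
    (hx : Module.finrank ℝ x.direction = 1)
    (A B C : EuclideanSpace ℝ (Fin 2))
    (hAB : OppSideOfLine x A B) (hBC : OppSideOfLine x B C) :
    SameSideOfLine x A C := by
  obtain ⟨hA, hB, P, hP, hPsb⟩ := hAB
  obtain ⟨_, hC, Q, hQ, hQsb⟩ := hBC
  have h1 : x.SOppSide A B := hPsb.sOppSide_of_notMem_of_mem hA hP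
  have h2 : x.SOppSide B C := hQsb.sOppSide_of_notMem_of_mem hB hQ
  have h3 : x.SSameSide A C := h1.trans h2
  refine ⟨hA, hC, ?_⟩
  rintro ⟨R, hR, hRsb⟩
  exact h3.not_sOppSide (hRsb.sOppSide_of_notMem_of_mem hA hR)
end

section
/- In the Euclidean plane E := EuclideanSpace ℝ (Fin 2), let x be a line and A, B, C points. If A and B lie on opposite sides of x, and B and C lie on the same side of x, then A and C lie on opposite sides of x. -/
private lemma exists_ker_eq_direction (x : AffineSubspace ℝ (EuclideanSpace ℝ (Fin 2)))
    (hx : Module.finrank ℝ x.direction = 1) :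
    ∃ f : EuclideanSpace ℝ (Fin 2) →ₗ[ℝ] ℝ, LinearMap.ker f = x.direction := by
  have h2 : Module.finrank ℝ (EuclideanSpace ℝ (Fin 2)) = 2 := by simp
  have horth : Module.finrank ℝ x.directionᗮ = 1 := by
    have := Submodule.finrank_add_finrank_orthogonal (K := x.direction)
    omega
  have hne : x.directionᗮ ≠ ⊥ := by
    intro h; rw [h] at horth; simp at horth
  obtain ⟨v, hv, hvne⟩ := Submodule.exists_mem_ne_zero_of_ne_bot hne
  set f : EuclideanSpace ℝ (Fin 2) →ₗ[ℝ] ℝ := (innerSL ℝ v).toLinearMap with hf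
  have hsub : x.direction ≤ LinearMap.ker f := by
    intro w hw
    have := (Submodule.mem_orthogonal x.direction v).1 hv w hw
    simp only [LinearMap.mem_ker, hf, ContinuousLinearMap.coe_coe, innerSL_apply_apply]
    rwa [real_inner_comm]
  have hfv : f v ≠ 0 := by
    have : f v = @inner ℝ _ _ v v := rfl
    rw [this]
    exact inner_self_ne_zero.2 hvne
  have hker : Module.finrank ℝ (LinearMap.ker f) = 1 := by
    have hrne : LinearMap.range f ≠ ⊥ := by
      intro h
      exact hfv (by simpa [h] using LinearMap.mem_range_self f v)
    have hr0 : Module.finrank ℝ (LinearMap.range f) ≠ 0 :=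
      fun h0 => hrne (Submodule.finrank_eq_zero.mp h0)
    have hr1 : Module.finrank ℝ (LinearMap.range f) ≤ 1 := by
      simpa using Submodule.finrank_le (LinearMap.range f)
    have := LinearMap.finrank_range_add_finrank_ker f
    omega
  exact ⟨f, (Submodule.eq_of_le_of_finrank_eq hsub (by omega)).symm⟩

theorem oppSide_sameSide_oppSide
    (x : AffineSubspace ℝ (EuclideanSpace ℝ (Fin 2)))
    (hx : Module.finrank ℝ x.direction = 1)
    (A B C : EuclideanSpace ℝ (Fin 2))
    (hAB : OppSideOfLine x A B) (hBC : SameSideOfLine x B C) :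
    OppSideOfLine x A C := by
  obtain ⟨hA, hB, hABex⟩ := hAB
  obtain ⟨hB', hC, hBCnex⟩ := hBC
  obtain ⟨P0, hP0, -⟩ := id hABex
  obtain ⟨f, hkerf⟩ := exists_ker_eq_direction x hx
  set g : EuclideanSpace ℝ (Fin 2) → ℝ := fun y => f (y -ᵥ P0) with hgdef
  have hmem : ∀ y, y ∈ x ↔ g y = 0 := by
    intro y
    rw [← AffineSubspace.vsub_right_mem_direction_iff_mem hP0 y, ← hkerf]
    exact Iff.rfl
  have hg : ∀ (Y Z : EuclideanSpace ℝ (Fin 2)) (t : ℝ),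
      g (AffineMap.lineMap Y Z t) = t * (g Z - g Y) + g Y := by
    intro Y Z t
    simp only [hgdef, AffineMap.lineMap_apply, vadd_vsub_assoc, map_add, map_smul,
      smul_eq_mul]
    rw [← vsub_sub_vsub_cancel_right Z Y P0, map_sub]
  have key : ∀ Y Z : EuclideanSpace ℝ (Fin 2), Y ∉ x → Z ∉ x →
      ((∃ P ∈ x, Sbtw ℝ Y P Z) ↔ g Y * g Z < 0) := by
    intro Y Z hY hZ
    have hgY : g Y ≠ 0 := fun h => hY ((hmem Y).2 h)
    have hgZ : g Z ≠ 0 := fun h => hZ ((hmem Z).2 h)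
    constructor
    · rintro ⟨P, hPx, hP⟩
      obtain ⟨t, ht, hPt⟩ := hP.mem_image_Ioo
      have h0 : g P = 0 := (hmem P).1 hPx
      rw [← hPt, hg] at h0
      obtain ⟨ht0, ht1⟩ := ht
      by_contra hcon
      push_neg at hcon
      have e : t * (g Y * g Z) = (t - 1) * (g Y * g Y) := by linear_combination g Y * h0
      nlinarith [mul_self_pos.2 hgY, mul_nonneg ht0.le hcon]
    · intro hlt
      have hYZ : g Y ≠ g Z := by
        intro h
        rw [h] at hlt
        exact absurd hlt (by nlinarith [sq_nonneg (g Z)])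
      set t : ℝ := g Y / (g Y - g Z) with hte
      have hsub : g Y - g Z ≠ 0 := sub_ne_zero.2 hYZ
      have ht : t ∈ Set.Ioo (0 : ℝ) 1 := by
        constructor
        · rw [hte]
          rcases hgY.lt_or_gt with h | h
          · have hz : 0 < g Z := by nlinarith
            exact div_pos_iff.mpr (Or.inr ⟨h, by linarith⟩)
          · have hz : g Z < 0 := by nlinarith
            exact div_pos h (by linarith)
        · rw [hte, div_lt_one_iff]
          rcases hgY.lt_or_gt with h | h
          · have hz : 0 < g Z := by nlinarith
            right; right; constructor <;> linarith
          · have hz : g Z < 0 := by nlinarith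
            left; constructor <;> linarith
      refine ⟨AffineMap.lineMap Y Z t, ?_, ?_⟩
      · rw [hmem, hg, hte]
        field_simp
        ring
      · rw [sbtw_lineMap_iff]
        refine ⟨fun h => ?_, ht⟩
        · rw [h] at hYZ; exact hYZ rfl
    -- end key
  have h1 : g A * g B < 0 := (key A B hA hB).1 hABex
  have h2 : ¬ g B * g C < 0 := fun h => hBCnex ((key B C hB hC).2 h)
  have hgB : g B ≠ 0 := fun h => hB ((hmem B).2 h)
  have hgC : g C ≠ 0 := fun h => hC ((hmem C).2 h)
  have h3 : 0 < g B * g C := by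
    rcases (mul_ne_zero hgB hgC).lt_or_gt with h | h
    · exact absurd h h2
    · exact h
  refine ⟨hA, hC, (key A C hA hC).2 ?_⟩
  nlinarith [mul_self_pos.2 hgB]
end

section
/- (ASA congruence) Let A, B, C, D, E, F be points in the Euclidean plane E := EuclideanSpace ℝ (Fin 2) with ¬ Collinear ℝ {A, B, C} and ¬ Collinear ℝ {D, E, F}. If dist A C = dist D F, ∠ B C A = ∠ E F D, and ∠ C A B = ∠ F D E, then dist A B = dist D E, dist B C = dist E F, and ∠ A B C = ∠ D E F. -/
open EuclideanGeometry Real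

lemma sin_angle_mul_dist_mul_dist {V P : Type*} [NormedAddCommGroup V]
    [InnerProductSpace ℝ V] [MetricSpace P] [NormedAddTorsor V P] (p₁ p₂ p₃ : P) :
    Real.sin (∠ p₂ p₁ p₃) * (dist p₁ p₂ * dist p₁ p₃) =
      Real.sin (∠ p₁ p₂ p₃) * (dist p₂ p₁ * dist p₂ p₃) := by
  rw [EuclideanGeometry.angle, EuclideanGeometry.angle,
    dist_eq_norm_vsub' (V := V) p₁ p₂, dist_eq_norm_vsub' (V := V) p₁ p₃,
    dist_eq_norm_vsub' (V := V) p₂ p₁, dist_eq_norm_vsub' (V := V) p₂ p₃,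
    InnerProductGeometry.sin_angle_mul_norm_mul_norm,
    InnerProductGeometry.sin_angle_mul_norm_mul_norm]
  congr 1
  have h1 : (p₁ -ᵥ p₂ : V) = -(p₂ -ᵥ p₁) := by rw [neg_vsub_eq_vsub_rev]
  have h3 : (p₃ -ᵥ p₂ : V) = (p₃ -ᵥ p₁) - (p₂ -ᵥ p₁) := by rw [vsub_sub_vsub_cancel_right]
  rw [h1, h3]
  simp only [inner_neg_neg, inner_neg_left, inner_neg_right, inner_sub_left, inner_sub_right,
    real_inner_comm (p₂ -ᵥ p₁) (p₃ -ᵥ p₁)]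
  ring

lemma not_collinear_perm {k V P : Type*} [DivisionRing k] [AddCommGroup V] [Module k V]
    [AddTorsor V P] {p₁ p₂ p₃ : P} (h : ¬ Collinear k ({p₁, p₂, p₃} : Set P)) :
    ¬ Collinear k ({p₂, p₃, p₁} : Set P) := by
  intro hc
  apply h
  have : ({p₁, p₂, p₃} : Set P) = {p₂, p₃, p₁} := by
    ext x; simp only [Set.mem_insert_iff, Set.mem_singleton_iff]; tauto
  rwa [this]

theorem asa_congruence
    (A B C D E F : EuclideanSpace ℝ (Fin 2))
    (h₁ : ¬ Collinear ℝ ({A, B, C} : Set (EuclideanSpace ℝ (Fin 2))))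
    (h₂ : ¬ Collinear ℝ ({D, E, F} : Set (EuclideanSpace ℝ (Fin 2))))
    (hAC : dist A C = dist D F)
    (hang₁ : ∠ B C A = ∠ E F D) (hang₂ : ∠ C A B = ∠ F D E) :
    dist A B = dist D E ∧ dist B C = dist E F ∧ ∠ A B C = ∠ D E F := by
  have hBA : B ≠ A := (ne₁₂_of_not_collinear h₁).symm
  have hCA : C ≠ A := (ne₁₃_of_not_collinear h₁).symm
  have hED : E ≠ D := (ne₁₂_of_not_collinear h₂).symm
  have hFD : F ≠ D := (ne₁₃_of_not_collinear h₂).symm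
  -- third angle equality
  have hsum₁ : ∠ A B C + ∠ B C A + ∠ C A B = π :=
    EuclideanGeometry.angle_add_angle_add_angle_eq_pi C hBA
  have hsum₂ : ∠ D E F + ∠ E F D + ∠ F D E = π :=
    EuclideanGeometry.angle_add_angle_add_angle_eq_pi F hED
  have hangB : ∠ A B C = ∠ D E F := by
    have := hsum₁.trans hsum₂.symm
    rw [hang₁, hang₂] at this
    linarith
  -- sines
  have hsinB : 0 < Real.sin (∠ A B C) := EuclideanGeometry.sin_pos_of_not_collinear h₁
  have hposCA : 0 < dist C A := dist_pos.2 (hCA.trans_eq rfl)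
  have hposBA : 0 < dist B A := dist_pos.2 hBA
  have hposFD : 0 < dist F D := dist_pos.2 hFD
  have hposED : 0 < dist E D := dist_pos.2 hED
  -- law of sines relations for ABC
  have law1 : Real.sin (∠ B C A) * dist C A = Real.sin (∠ A B C) * dist B A := by
    have h := sin_angle_mul_dist_mul_dist C B A
    rw [EuclideanGeometry.angle_comm C B A] at h
    have hCB : dist C B = dist B C := dist_comm C B
    have key : dist B C * (Real.sin (∠ B C A) * dist C A)
        = dist B C * (Real.sin (∠ A B C) * dist B A) :=
      calc dist B C * (Real.sin (∠ B C A) * dist C A)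
          = Real.sin (∠ B C A) * (dist C B * dist C A) := by rw [dist_comm C B]; ring
        _ = Real.sin (∠ A B C) * (dist B C * dist B A) := h
        _ = dist B C * (Real.sin (∠ A B C) * dist B A) := by ring
    exact mul_left_cancel₀ (ne_of_gt (dist_pos.2 ((ne₂₃_of_not_collinear h₁) : B ≠ C))) key
  have law2 : Real.sin (∠ C A B) * dist C A = Real.sin (∠ A B C) * dist B C := by
    have h := sin_angle_mul_dist_mul_dist A B C
    rw [EuclideanGeometry.angle_comm B A C] at h
    have key : dist B A * (Real.sin (∠ C A B) * dist C A)
        = dist B A * (Real.sin (∠ A B C) * dist B C) :=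
      calc dist B A * (Real.sin (∠ C A B) * dist C A)
          = Real.sin (∠ C A B) * (dist A B * dist A C) := by
            rw [dist_comm B A, dist_comm C A]; ring
        _ = Real.sin (∠ A B C) * (dist B A * dist B C) := h
        _ = dist B A * (Real.sin (∠ A B C) * dist B C) := by ring
    exact mul_left_cancel₀ (ne_of_gt hposBA) key
  -- law of sines relations for DEF
  have hsinE : 0 < Real.sin (∠ D E F) := EuclideanGeometry.sin_pos_of_not_collinear h₂
  have law1' : Real.sin (∠ E F D) * dist F D = Real.sin (∠ D E F) * dist E D := by
    have h := sin_angle_mul_dist_mul_dist F E D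
    rw [EuclideanGeometry.angle_comm F E D] at h
    have key : dist E F * (Real.sin (∠ E F D) * dist F D)
        = dist E F * (Real.sin (∠ D E F) * dist E D) :=
      calc dist E F * (Real.sin (∠ E F D) * dist F D)
          = Real.sin (∠ E F D) * (dist F E * dist F D) := by rw [dist_comm F E]; ring
        _ = Real.sin (∠ D E F) * (dist E F * dist E D) := h
        _ = dist E F * (Real.sin (∠ D E F) * dist E D) := by ring
    exact mul_left_cancel₀ (ne_of_gt (dist_pos.2 ((ne₂₃_of_not_collinear h₂) : E ≠ F))) key
  have law2' : Real.sin (∠ F D E) * dist F D = Real.sin (∠ D E F) * dist E F := by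
    have h := sin_angle_mul_dist_mul_dist D E F
    rw [EuclideanGeometry.angle_comm E D F] at h
    have key : dist E D * (Real.sin (∠ F D E) * dist F D)
        = dist E D * (Real.sin (∠ D E F) * dist E F) :=
      calc dist E D * (Real.sin (∠ F D E) * dist F D)
          = Real.sin (∠ F D E) * (dist D E * dist D F) := by
            rw [dist_comm E D, dist_comm F D]; ring
        _ = Real.sin (∠ D E F) * (dist E D * dist E F) := h
        _ = dist E D * (Real.sin (∠ D E F) * dist E F) := by ring
    exact mul_left_cancel₀ (ne_of_gt hposED) key
  have hCAFD : dist C A = dist F D := by rw [dist_comm C A, dist_comm F D]; exact hAC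
  have hsinBE : Real.sin (∠ A B C) = Real.sin (∠ D E F) := by rw [hangB]
  have hAB : dist A B = dist D E := by
    have : Real.sin (∠ A B C) * dist B A = Real.sin (∠ D E F) * dist E D := by
      rw [← law1, ← law1', hang₁, hCAFD]
    rw [hsinBE] at this
    have := mul_left_cancel₀ (ne_of_gt hsinE) this
    rw [dist_comm A B, dist_comm D E]; exact this
  have hBC : dist B C = dist E F := by
    have : Real.sin (∠ A B C) * dist B C = Real.sin (∠ D E F) * dist E F := by
      rw [← law2, ← law2', hang₂, hCAFD]
    rw [hsinBE] at this
    exact mul_left_cancel₀ (ne_of_gt hsinE) this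
  exact ⟨hAB, hBC, hangB⟩
end

section
/- (Triangle superposition) Let A, B, C, D, E, F be points in the Euclidean plane E := EuclideanSpace ℝ (Fin 2) with ¬ Collinear ℝ {A, B, C}, ¬ Collinear ℝ {D, E, F}, and dist A B = dist D E. Then there exists a point F' such that F' and F lie strictly on the same side of the line through D and E (i.e., (affineSpan ℝ {D, E}).SSameSide F F'), dist D F' = dist A C, and dist E F' = dist B C. -/
set_option maxHeartbeats 1000000

open RealInnerProductSpace

/-- If an affine subspace is characterized by the vanishing of the functional `⟪n, · - D⟫`,
then two points where this functional is positive lie strictly on the same side. -/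
lemma sside_of_pos {V : Type*} [NormedAddCommGroup V] [InnerProductSpace ℝ V]
    (s : AffineSubspace ℝ V) (n D : V)
    (hmem : ∀ x : V, x ∈ s ↔ ⟪n, x - D⟫ = 0) (hn : n ≠ 0)
    {x y : V} (hx : 0 < ⟪n, x - D⟫) (hy : 0 < ⟪n, y - D⟫) :
    s.SSameSide x y := by
  have hnorm0 : (0:ℝ) < ‖n‖ := norm_pos_iff.2 hn
  have hnn : (0:ℝ) < ⟪n, n⟫ := by rw [real_inner_self_eq_norm_sq]; positivity
  set cx : ℝ := ⟪n, x - D⟫ / ⟪n, n⟫ with hcx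
  set cy : ℝ := ⟪n, y - D⟫ / ⟪n, n⟫ with hcy
  have hcx0 : 0 ≤ cx := le_of_lt (div_pos hx hnn)
  have hcy0 : 0 ≤ cy := le_of_lt (div_pos hy hnn)
  have hp₁ : (x - cx • n) ∈ s := by
    rw [hmem]
    have h : x - cx • n - D = (x - D) - cx • n := by abel
    rw [h, inner_sub_right, real_inner_smul_right, hcx]
    field_simp
    ring
  have hp₂ : (y - cy • n) ∈ s := by
    rw [hmem]
    have h : y - cy • n - D = (y - D) - cy • n := by abel
    rw [h, inner_sub_right, real_inner_smul_right, hcy]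
    field_simp
    ring
  refine ⟨⟨x - cx • n, hp₁, y - cy • n, hp₂, ?_⟩, ?_, ?_⟩
  · have h1 : x -ᵥ (x - cx • n) = cx • n := by rw [vsub_eq_sub]; abel
    have h2 : y -ᵥ (y - cy • n) = cy • n := by rw [vsub_eq_sub]; abel
    rw [h1, h2]
    exact (SameRay.sameRay_nonneg_smul_left n hcx0).nonneg_smul_right hcy0
  · rw [hmem]; exact ne_of_gt hx
  · rw [hmem]; exact ne_of_gt hy

theorem triangle_superposition
    (A B C D E F : EuclideanSpace ℝ (Fin 2))
    (h₁ : ¬ Collinear ℝ ({A, B, C} : Set (EuclideanSpace ℝ (Fin 2))))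
    (h₂ : ¬ Collinear ℝ ({D, E, F} : Set (EuclideanSpace ℝ (Fin 2))))
    (hbase : dist A B = dist D E) :
    ∃ F' : EuclideanSpace ℝ (Fin 2),
      (affineSpan ℝ ({D, E} : Set (EuclideanSpace ℝ (Fin 2)))).SSameSide F F' ∧
      dist D F' = dist A C ∧ dist E F' = dist B C := by
  classical
  have hAB : A ≠ B := by
    rintro rfl
    exact h₁ (by simpa using collinear_pair ℝ A C)
  set L : ℝ := dist A B with hLdef
  have hL : 0 < L := dist_pos.2 hAB
  have hL' : L ≠ 0 := ne_of_gt hL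
  have hDEdist : dist D E = L := hbase.symm
  have hDE : D ≠ E := dist_pos.1 (by rw [hDEdist]; exact hL)
  set s : AffineSubspace ℝ (EuclideanSpace ℝ (Fin 2)) :=
    affineSpan ℝ ({D, E} : Set (EuclideanSpace ℝ (Fin 2))) with hs
  have hv : D - E ≠ 0 := sub_ne_zero.2 hDE
  have hdir : s.direction = ℝ ∙ (D - E) := by
    rw [hs, direction_affineSpan, vectorSpan_pair, vsub_eq_sub]
  set K : Submodule ℝ (EuclideanSpace ℝ (Fin 2)) := ℝ ∙ (D - E) with hK
  have hfinK : Module.finrank ℝ K = 1 := finrank_span_singleton hv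
  have hfinKo : Module.finrank ℝ Kᗮ = 1 := by
    have h := Submodule.finrank_add_finrank_orthogonal K
    rw [hfinK, finrank_euclideanSpace_fin] at h
    omega
  have hKone : Kᗮ ≠ ⊥ := by
    intro h
    rw [h, finrank_bot] at hfinKo
    exact one_ne_zero hfinKo.symm
  obtain ⟨n₀, hn₀K, hn₀⟩ := Submodule.exists_mem_ne_zero_of_ne_bot hKone
  have hFs : F ∉ s := by
    intro hF
    refine h₂ (Collinear.subset ?_ ((collinear_insert_iff_of_mem_affineSpan hF).2
      (collinear_pair ℝ D E)))
    intro z hz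
    simp only [Set.mem_insert_iff, Set.mem_singleton_iff] at hz ⊢
    tauto
  have hmem_gen : ∀ n : EuclideanSpace ℝ (Fin 2), n ∈ Kᗮ → n ≠ 0 →
      ∀ x : EuclideanSpace ℝ (Fin 2), x ∈ s ↔ ⟪n, x - D⟫ = 0 := by
    intro n hnK hn x
    have hspan : (ℝ ∙ n) = Kᗮ := by
      refine Submodule.eq_of_le_of_finrank_eq ?_ ?_
      · rwa [Submodule.span_singleton_le_iff_mem]
      · rw [finrank_span_singleton hn, hfinKo]
    have hKoo : (ℝ ∙ n)ᗮ = K := by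
      rw [hspan, Submodule.orthogonal_orthogonal]
    have hDmem : D ∈ s := left_mem_affineSpan_pair ℝ D E
    rw [← AffineSubspace.vsub_right_mem_direction_iff_mem hDmem x, hdir, ← hKoo,
      Submodule.mem_orthogonal_singleton_iff_inner_right, vsub_eq_sub]
  have hFD0 : ⟪n₀, F - D⟫ ≠ 0 := fun h => hFs ((hmem_gen n₀ hn₀K hn₀ F).2 h)
  set n : EuclideanSpace ℝ (Fin 2) := if 0 < ⟪n₀, F - D⟫ then n₀ else -n₀ with hn_def
  have hnK : n ∈ Kᗮ := by
    rw [hn_def]; split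
    · exact hn₀K
    · exact Submodule.neg_mem _ hn₀K
  have hn : n ≠ 0 := by
    rw [hn_def]; split
    · exact hn₀
    · simpa using hn₀
  have hF_pos : 0 < ⟪n, F - D⟫ := by
    rw [hn_def]
    split
    · assumption
    · next h =>
      rw [inner_neg_left]
      rcases hFD0.lt_or_gt with h' | h'
      · linarith
      · exact absurd h' h
  have hmem : ∀ x : EuclideanSpace ℝ (Fin 2), x ∈ s ↔ ⟪n, x - D⟫ = 0 := hmem_gen n hnK hn
  have hnED : ⟪n, E - D⟫ = 0 := by
    have h1 : ⟪D - E, n⟫ = 0 :=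
      (Submodule.mem_orthogonal K n).1 hnK (D - E) (Submodule.mem_span_singleton_self _)
    have h2 : ⟪n, D - E⟫ = 0 := by rwa [real_inner_comm]
    have h3 : E - D = -(D - E) := by abel
    rw [h3, inner_neg_right, h2, neg_zero]
  -- unit vectors
  obtain ⟨u, hu_def⟩ : ∃ u : EuclideanSpace ℝ (Fin 2), u = L⁻¹ • (E - D) := ⟨_, rfl⟩
  obtain ⟨w, hw_def⟩ : ∃ w : EuclideanSpace ℝ (Fin 2), w = ‖n‖⁻¹ • n := ⟨_, rfl⟩
  have hED_norm : ‖E - D‖ = L := by rw [← dist_eq_norm, dist_comm, hDEdist]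
  have hnnorm : (0:ℝ) < ‖n‖ := norm_pos_iff.2 hn
  have huu : ⟪u, u⟫ = 1 := by
    rw [hu_def, real_inner_smul_left, real_inner_smul_right,
      real_inner_self_eq_norm_sq, hED_norm]
    field_simp
  have hww : ⟪w, w⟫ = 1 := by
    rw [hw_def, real_inner_smul_left, real_inner_smul_right,
      real_inner_self_eq_norm_sq]
    field_simp
  have hnu : ⟪n, u⟫ = 0 := by
    rw [hu_def, real_inner_smul_right, hnED, mul_zero]
  have huw : ⟪u, w⟫ = 0 := by
    rw [hw_def, real_inner_smul_right, real_inner_comm, hnu, mul_zero]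
  have hnw : 0 < ⟪n, w⟫ := by
    rw [hw_def, real_inner_smul_right, real_inner_self_eq_norm_sq]
    positivity
  have hLu : L • u = E - D := by
    rw [hu_def, smul_smul, mul_inv_cancel₀ hL', one_smul]
  -- scalar quantities
  set AC : ℝ := dist A C with hACdef
  set BC : ℝ := dist B C with hBCdef
  set a : ℝ := (AC ^ 2 + L ^ 2 - BC ^ 2) / (2 * L) with ha_def
  have hBA_norm : ‖B - A‖ = L := by rw [← dist_eq_norm, dist_comm]
  have hCA_norm : ‖C - A‖ = AC := by rw [← dist_eq_norm, dist_comm]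
  have hBC_norm : ‖(B - A) - (C - A)‖ = BC := by
    have h : (B - A) - (C - A) = B - C := by abel
    rw [h, ← dist_eq_norm]
  have hinner_eq : ⟪B - A, C - A⟫ = a * L := by
    have h := norm_sub_sq_real (B - A) (C - A)
    rw [hBC_norm, hBA_norm, hCA_norm] at h
    have h2 : 2 * ⟪B - A, C - A⟫ = AC ^ 2 + L ^ 2 - BC ^ 2 := by linarith
    rw [ha_def, div_mul_eq_mul_div, mul_comm (2:ℝ) L, ← div_div,
      mul_div_assoc, div_self hL', mul_one]
    linarith
  have hindep : ∀ r : ℝ, C - A ≠ r • (B - A) := by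
    intro r hr
    apply h₁
    rw [collinear_iff_of_mem (Set.mem_insert A {B, C})]
    refine ⟨B - A, ?_⟩
    rintro p hp
    simp only [Set.mem_insert_iff, Set.mem_singleton_iff] at hp
    rcases hp with rfl | rfl | rfl
    · exact ⟨0, by rw [zero_smul, zero_vadd]⟩
    · exact ⟨1, by rw [one_smul, vadd_eq_add]; abel⟩
    · exact ⟨r, by rw [vadd_eq_add, ← hr]; abel⟩
  have key : ∀ y' : EuclideanSpace ℝ (Fin 2), (∀ r : ℝ, y' ≠ r • (B - A)) →
      ⟪B - A, y'⟫ < L * ‖y'‖ := by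
    intro y' hy'
    have h := inner_lt_norm_mul_iff_real (x := B - A) (y := y')
    rw [hBA_norm] at h
    apply h.2
    intro heq
    refine hy' (‖y'‖ / L) ?_
    rw [div_eq_inv_mul, ← smul_smul, heq, inv_smul_smul₀ hL']
  have hCS : |⟪B - A, C - A⟫| < L * AC := by
    rw [abs_lt]
    constructor
    · have h := key (-(C - A)) (by
        intro r hr
        exact hindep (-r) (by rw [neg_smul, ← hr]; abel))
      rw [inner_neg_right, norm_neg, hCA_norm] at h
      linarith
    · have h := key (C - A) (fun r => hindep r)
      rwa [hCA_norm] at h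
  have habs : |a| < AC := by
    rw [hinner_eq, abs_mul, abs_of_pos hL, mul_comm] at hCS
    exact lt_of_mul_lt_mul_left hCS (le_of_lt hL)
  have ha_lt : a ^ 2 < AC ^ 2 := by
    nlinarith [abs_nonneg a, sq_abs a]
  set b : ℝ := Real.sqrt (AC ^ 2 - a ^ 2) with hb_def
  have hb_pos : 0 < b := Real.sqrt_pos.2 (by linarith)
  have hb_sq : b ^ 2 = AC ^ 2 - a ^ 2 := Real.sq_sqrt (by linarith)
  obtain ⟨F', hF'_def⟩ : ∃ F' : EuclideanSpace ℝ (Fin 2), F' = (a • u + b • w) + D := ⟨_, rfl⟩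
  have hF'D : F' - D = a • u + b • w := by rw [hF'_def]; abel
  have hF'E : F' - E = (a - L) • u + b • w := by
    rw [hF'_def, sub_smul, hLu]; abel
  have hnormsq : ∀ c : ℝ, ‖c • u + b • w‖ ^ 2 = c ^ 2 + b ^ 2 := by
    intro c
    rw [← real_inner_self_eq_norm_sq]
    simp only [real_inner_add_add_self, real_inner_smul_left, real_inner_smul_right]
    rw [huu, huw, hww]
    ring
  have hACnn : (0:ℝ) ≤ AC := dist_nonneg
  have hBCnn : (0:ℝ) ≤ BC := dist_nonneg
  have hdist1 : dist D F' = AC := by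
    have h : dist D F' ^ 2 = AC ^ 2 := by
      rw [dist_comm, dist_eq_norm, hF'D, hnormsq a]
      linarith
    calc dist D F' = Real.sqrt (dist D F' ^ 2) := (Real.sqrt_sq dist_nonneg).symm
      _ = Real.sqrt (AC ^ 2) := by rw [h]
      _ = AC := Real.sqrt_sq hACnn
  have h2aL : 2 * a * L = AC ^ 2 + L ^ 2 - BC ^ 2 := by
    rw [ha_def]
    field_simp
  have hdist2 : dist E F' = BC := by
    have h : dist E F' ^ 2 = BC ^ 2 := by
      rw [dist_comm, dist_eq_norm, hF'E, hnormsq (a - L)]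
      nlinarith
    calc dist E F' = Real.sqrt (dist E F' ^ 2) := (Real.sqrt_sq dist_nonneg).symm
      _ = Real.sqrt (BC ^ 2) := by rw [h]
      _ = BC := Real.sqrt_sq hBCnn
  have hF'_pos : 0 < ⟪n, F' - D⟫ := by
    rw [hF'D]
    simp only [inner_add_right, real_inner_smul_right]
    rw [hnu, mul_zero, zero_add]
    exact mul_pos hb_pos hnw
  exact ⟨F', sside_of_pos s n D hmem hn hF_pos hF'_pos, hdist1, hdist2⟩
end

section
/- Let O, A, B, A', B', P be points in the Euclidean plane E := EuclideanSpace ℝ (Fin 2) and O' a further point, with ¬ Collinear ℝ {O, O', P}. Suppose: Sbtw ℝ A O B with dist O A = dist O B (A, B are diametrically opposite on the circle centred at O), Sbtw ℝ A' O' B' with dist O' A' = dist O' B', dist O A = dist O P and dist O' A' = dist O' P (P lies on both circles), and the four points A, O, O', B' are in strict order (Sbtw ℝ A O O', Sbtw ℝ A O B', Sbtw ℝ A O' B', Sbtw ℝ O O' B'). Then the four points A, A', B, B' are in strict order: Sbtw ℝ A A' B, Sbtw ℝ A A' B', Sbtw ℝ A B B', and Sbtw ℝ A' B B'. -/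
private lemma real_sbtw_of_lt {x y z : ℝ} (h1 : x < y) (h2 : y < z) : Sbtw ℝ x y z := by
  refine ⟨mem_segment_iff_wbtw.mp ?_, h1.ne', h2.ne⟩
  rw [segment_eq_Icc (h1.trans h2).le]
  exact ⟨h1.le, h2.le⟩

private lemma real_sbtw_cases {x y z : ℝ} (h : Sbtw ℝ x y z) :
    (x < y ∧ y < z) ∨ (z < y ∧ y < x) := by
  have hw : y ∈ segment ℝ x z := mem_segment_iff_wbtw.mpr h.wbtw
  rcases le_total x z with hxz | hzx
  · rw [segment_eq_Icc hxz] at hw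
    exact Or.inl ⟨hw.1.lt_of_ne (Ne.symm h.ne_left), hw.2.lt_of_ne h.ne_right⟩
  · rw [segment_symm, segment_eq_Icc hzx] at hw
    exact Or.inr ⟨hw.1.lt_of_ne (Ne.symm h.ne_right), hw.2.lt_of_ne h.ne_left⟩

private lemma exists_lineMap_eq {V P : Type*} [AddCommGroup V] [Module ℝ V] [AddTorsor V P]
    {p₁ p₂ p : P} (h : p ∈ line[ℝ, p₁, p₂]) :
    ∃ t : ℝ, AffineMap.lineMap p₁ p₂ t = p := by
  have h' : (p -ᵥ p₁) +ᵥ p₁ ∈ line[ℝ, p₁, p₂] := by rwa [vsub_vadd]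
  rw [vadd_left_mem_affineSpan_pair] at h'
  obtain ⟨r, hr⟩ := h'
  exact ⟨r, by rw [AffineMap.lineMap_apply, hr, vsub_vadd]⟩

set_option maxHeartbeats 1000000 in
theorem intersecting_circles_interlocked_order
    (O A B A' B' P O' : EuclideanSpace ℝ (Fin 2))
    (hncol : ¬ Collinear ℝ ({O, O', P} : Set (EuclideanSpace ℝ (Fin 2))))
    (hAOB : Sbtw ℝ A O B) (hOA : dist O A = dist O B)
    (hA'O'B' : Sbtw ℝ A' O' B') (hO'A' : dist O' A' = dist O' B')
    (hP : dist O A = dist O P) (hP' : dist O' A' = dist O' P)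
    (h₁ : Sbtw ℝ A O O') (h₂ : Sbtw ℝ A O B')
    (h₃ : Sbtw ℝ A O' B') (h₄ : Sbtw ℝ O O' B') :
    Sbtw ℝ A A' B ∧ Sbtw ℝ A A' B' ∧ Sbtw ℝ A B B' ∧ Sbtw ℝ A' B B' := by
  have hOO' : O ≠ O' := h₁.ne_right
  have hd : 0 < dist O O' := dist_pos.mpr hOO'
  have hr : 0 < dist O A := dist_pos.mpr hAOB.ne_left
  have hr' : 0 < dist O' A' := dist_pos.mpr hA'O'B'.ne_left
  -- strict triangle inequalities since P is off the line
  have tri1 : dist O O' < dist O A + dist O' A' := by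
    rcases lt_or_eq_of_le (dist_triangle O P O') with h | h
    · rw [hP, hP', dist_comm O' P]; exact h
    · exact absurd ((dist_add_dist_eq_iff.mp h.symm).collinear.subset
        (by intro x hx; simp at hx ⊢; tauto)) hncol
  have tri2 : dist O A < dist O O' + dist O' A' := by
    rcases lt_or_eq_of_le (dist_triangle O O' P) with h | h
    · rw [hP, hP']; exact h
    · exact absurd (dist_add_dist_eq_iff.mp h.symm).collinear hncol
  have tri3 : dist O' A' < dist O O' + dist O A := by
    rcases lt_or_eq_of_le (dist_triangle O' O P) with h | h
    · rw [hP', hP, dist_comm O O']; exact h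
    · refine absurd ((dist_add_dist_eq_iff.mp h.symm).collinear.subset ?_) hncol
      intro x hx; simp at hx ⊢; tauto
  -- the common line
  have hf : Function.Injective (AffineMap.lineMap O O' : ℝ → EuclideanSpace ℝ (Fin 2)) :=
    AffineMap.lineMap_injective ℝ hOO'
  have hO0 : AffineMap.lineMap O O' (0 : ℝ) = O := AffineMap.lineMap_apply_zero O O'
  have hO'1 : AffineMap.lineMap O O' (1 : ℝ) = O' := AffineMap.lineMap_apply_one O O'
  -- memberships in the line
  have hAmem : A ∈ line[ℝ, O, O'] :=
    h₁.wbtw.collinear.mem_affineSpan_of_mem_of_ne (by simp) (by simp) (by simp) hOO'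
  have hB'mem : B' ∈ line[ℝ, O, O'] :=
    h₄.wbtw.collinear.mem_affineSpan_of_mem_of_ne (by simp) (by simp) (by simp) hOO'
  have hAO : A ≠ O := Ne.symm hAOB.ne_left
  have hBmem : B ∈ line[ℝ, O, O'] := by
    have hB : B ∈ line[ℝ, A, O] :=
      hAOB.wbtw.collinear.mem_affineSpan_of_mem_of_ne (by simp) (by simp) (by simp) hAO
    have hle : line[ℝ, A, O] ≤ line[ℝ, O, O'] := by
      apply affineSpan_le.mpr
      intro x hx
      simp only [Set.mem_insert_iff, Set.mem_singleton_iff] at hx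
      rcases hx with h | h
      · rw [h]; exact hAmem
      · rw [h]; exact left_mem_affineSpan_pair _ _ _
    exact hle hB
  have hO'B' : O' ≠ B' := h₄.ne_right
  have hA'mem : A' ∈ line[ℝ, O, O'] := by
    have hA' : A' ∈ line[ℝ, O', B'] :=
      hA'O'B'.wbtw.collinear.mem_affineSpan_of_mem_of_ne (by simp) (by simp) (by simp) hO'B'
    have hle : line[ℝ, O', B'] ≤ line[ℝ, O, O'] := by
      apply affineSpan_le.mpr
      intro x hx
      simp only [Set.mem_insert_iff, Set.mem_singleton_iff] at hx
      rcases hx with h | h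
      · rw [h]; exact right_mem_affineSpan_pair _ _ _
      · rw [h]; exact hB'mem
    exact hle hA'
  obtain ⟨a, ha⟩ := exists_lineMap_eq hAmem
  obtain ⟨b, hb⟩ := exists_lineMap_eq hBmem
  obtain ⟨a', ha'⟩ := exists_lineMap_eq hA'mem
  obtain ⟨b', hb'⟩ := exists_lineMap_eq hB'mem
  -- pull back betweenness to ℝ
  have sb1 : Sbtw ℝ a (0 : ℝ) (1 : ℝ) := by
    rw [← hf.sbtw_map_iff]; simpa [ha, hO0, hO'1] using h₁
  have sb2 : Sbtw ℝ a (0 : ℝ) b := by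
    rw [← hf.sbtw_map_iff]; simpa [ha, hb, hO0] using hAOB
  have sb3 : Sbtw ℝ (0 : ℝ) (1 : ℝ) b' := by
    rw [← hf.sbtw_map_iff]; simpa [hb', hO0, hO'1] using h₄
  have sb4 : Sbtw ℝ a' (1 : ℝ) b' := by
    rw [← hf.sbtw_map_iff]; simpa [ha', hb', hO'1] using hA'O'B'
  have ha_neg : a < 0 := by
    rcases real_sbtw_cases sb1 with h | h
    · exact h.1
    · linarith [h.1, h.2]
  have hb'_gt : 1 < b' := by
    rcases real_sbtw_cases sb3 with h | h
    · exact h.2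
    · linarith [h.1, h.2]
  have hb_pos : 0 < b := by
    rcases real_sbtw_cases sb2 with h | h
    · exact h.2
    · linarith [h.2]
  have ha'_lt : a' < 1 := by
    rcases real_sbtw_cases sb4 with h | h
    · exact h.1
    · linarith [h.1]
  -- distance equations
  have dOA : dist O A = |0 - a| * dist O O' := by
    have h := dist_lineMap_lineMap O O' (0 : ℝ) a
    rwa [hO0, ha, Real.dist_eq] at h
  have dOB : dist O A = |0 - b| * dist O O' := by
    have h := dist_lineMap_lineMap O O' (0 : ℝ) b
    rw [hO0, hb, Real.dist_eq] at h
    rw [hOA]; exact h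
  have dO'B' : dist O' A' = |1 - b'| * dist O O' := by
    have h := dist_lineMap_lineMap O O' (1 : ℝ) b'
    rw [hO'1, hb', Real.dist_eq] at h
    rw [hO'A']; exact h
  have dO'A' : dist O' A' = |1 - a'| * dist O O' := by
    have h := dist_lineMap_lineMap O O' (1 : ℝ) a'
    rwa [hO'1, ha', Real.dist_eq] at h
  rw [abs_of_pos (by linarith : (0:ℝ) < 0 - a)] at dOA
  rw [abs_of_neg (by linarith : (0:ℝ) - b < 0)] at dOB
  rw [abs_of_neg (by linarith : (1:ℝ) - b' < 0)] at dO'B'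
  rw [abs_of_pos (by linarith : (0:ℝ) < 1 - a')] at dO'A'
  -- product forms
  have ea : a * dist O O' = -(dist O A) := by nlinarith [dOA]
  have eb : b * dist O O' = dist O A := by nlinarith [dOB]
  have ea' : a' * dist O O' = dist O O' - dist O' A' := by nlinarith [dO'A']
  have eb' : b' * dist O O' = dist O O' + dist O' A' := by nlinarith [dO'B']
  -- order on the line: a < a' < b < b'
  have haa' : a < a' := by
    have h' : a * dist O O' < a' * dist O O' := by rw [ea, ea']; linarith
    exact lt_of_mul_lt_mul_right h' hd.le
  have ha'b : a' < b := by
    have h' : a' * dist O O' < b * dist O O' := by rw [ea', eb]; linarith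
    exact lt_of_mul_lt_mul_right h' hd.le
  have hbb' : b < b' := by
    have h' : b * dist O O' < b' * dist O O' := by rw [eb, eb']; linarith
    exact lt_of_mul_lt_mul_right h' hd.le
  refine ⟨?_, ?_, ?_, ?_⟩
  · rw [← ha, ← ha', ← hb]
    exact hf.sbtw_map_iff.mpr (real_sbtw_of_lt haa' ha'b)
  · rw [← ha, ← ha', ← hb']
    exact hf.sbtw_map_iff.mpr (real_sbtw_of_lt haa' (ha'b.trans hbb'))
  · rw [← ha, ← hb, ← hb']
    exact hf.sbtw_map_iff.mpr (real_sbtw_of_lt (haa'.trans ha'b) hbb')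
  · rw [← ha', ← hb, ← hb']
    exact hf.sbtw_map_iff.mpr (real_sbtw_of_lt ha'b hbb')
end

section
/- In the Euclidean plane E := EuclideanSpace ℝ (Fin 2), let x, y, z be lines (affine subspaces whose direction has finrank 1). Define x ∥ y to mean: x = y, or x and y have no common point. If x ∥ y and y ∥ z, then x ∥ z. -/
/-- Two lines are parallel: they coincide or have no common point. -/
def ParallelLines (x y : AffineSubspace ℝ (EuclideanSpace ℝ (Fin 2))) : Prop :=
  x = y ∨ ¬ ∃ A : EuclideanSpace ℝ (Fin 2), A ∈ x ∧ A ∈ y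

private lemma line_nonempty (x : AffineSubspace ℝ (EuclideanSpace ℝ (Fin 2)))
    (hx : Module.finrank ℝ x.direction = 1) : (x : Set (EuclideanSpace ℝ (Fin 2))).Nonempty := by
  rw [AffineSubspace.nonempty_iff_ne_bot]
  rintro rfl
  rw [AffineSubspace.direction_bot, finrank_bot] at hx
  exact absurd hx (by norm_num)

private lemma dir_eq (x y : AffineSubspace ℝ (EuclideanSpace ℝ (Fin 2)))
    (hx : Module.finrank ℝ x.direction = 1)
    (hy : Module.finrank ℝ y.direction = 1)
    (h : ¬ ∃ A : EuclideanSpace ℝ (Fin 2), A ∈ x ∧ A ∈ y) :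
    x.direction = y.direction := by
  by_contra hne
  have hsup : x.direction ⊔ y.direction = ⊤ := by
    apply Submodule.eq_top_of_finrank_eq
    have h1 : x.direction < x.direction ⊔ y.direction := by
      refine lt_of_le_of_ne le_sup_left fun heq => hne ?_
      have hle : y.direction ≤ x.direction := heq ▸ le_sup_right
      exact (Submodule.eq_of_le_of_finrank_eq hle (hy.trans hx.symm)).symm
    have h2' := Submodule.finrank_lt_finrank_of_lt h1
    rw [hx] at h2'
    have h2 : 2 ≤ Module.finrank ℝ (x.direction ⊔ y.direction : Submodule ℝ _) := h2'
    have h3 : Module.finrank ℝ (x.direction ⊔ y.direction : Submodule ℝ _) ≤ 2 := by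
      have := Submodule.finrank_le (x.direction ⊔ y.direction)
      simpa using this
    have : Module.finrank ℝ (EuclideanSpace ℝ (Fin 2)) = 2 := by simp
    omega
  obtain ⟨A, hAx, hAy⟩ := AffineSubspace.inter_nonempty_of_nonempty_of_sup_direction_eq_top
    (line_nonempty x hx) (line_nonempty y hy) hsup
  exact h ⟨A, hAx, hAy⟩

theorem parallel_trans
    (x y z : AffineSubspace ℝ (EuclideanSpace ℝ (Fin 2)))
    (hx : Module.finrank ℝ x.direction = 1)
    (hy : Module.finrank ℝ y.direction = 1)
    (hz : Module.finrank ℝ z.direction = 1)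
    (hxy : ParallelLines x y) (hyz : ParallelLines y z) :
    ParallelLines x z := by
  rcases hxy with rfl | hxy
  · exact hyz
  rcases hyz with rfl | hyz
  · exact Or.inr hxy
  have hdxz : x.direction = z.direction :=
    (dir_eq x y hx hy hxy).trans (dir_eq y z hy hz hyz)
  by_cases hint : ∃ A : EuclideanSpace ℝ (Fin 2), A ∈ x ∧ A ∈ z
  · obtain ⟨A, hAx, hAz⟩ := hint
    exact Or.inl (AffineSubspace.ext_of_direction_eq hdxz ⟨A, hAx, hAz⟩)
  · exact Or.inr hint
end

section
/- (Equilateral triangle on a given base, Euclid I.1) Let A, B, P be points in the Euclidean plane E := EuclideanSpace ℝ (Fin 2) with ¬ Collinear ℝ {A, B, P}. Then there exists a point C such that C and P lie strictly on the same side of the line through A and B (i.e., (affineSpan ℝ {A, B}).SSameSide C P) and dist A B = dist B C and dist B C = dist A C. -/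
theorem equilateral_triangle_on_base
    (A B P : EuclideanSpace ℝ (Fin 2))
    (h : ¬ Collinear ℝ ({A, B, P} : Set (EuclideanSpace ℝ (Fin 2)))) :
    ∃ C : EuclideanSpace ℝ (Fin 2),
      (affineSpan ℝ ({A, B} : Set (EuclideanSpace ℝ (Fin 2)))).SSameSide C P ∧
      dist A B = dist B C ∧ dist B C = dist A C := by
  have hABP : ({A, B, P} : Set (EuclideanSpace ℝ (Fin 2))) = insert P {A, B} := by
    ext x; simp; tauto
  have hAB : A ≠ B := by
    rintro rfl
    have hs : ({A, A, P} : Set (EuclideanSpace ℝ (Fin 2))) = {A, P} := by simp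
    exact h (by rw [hs]; exact collinear_pair ℝ A P)
  obtain ⟨v0, hv0⟩ : ∃ x : ℝ, x = B 0 - A 0 := ⟨_, rfl⟩
  obtain ⟨v1, hv1⟩ : ∃ x : ℝ, x = B 1 - A 1 := ⟨_, rfl⟩
  have hv : v0 ≠ 0 ∨ v1 ≠ 0 := by
    by_contra hc
    push_neg at hc
    apply hAB
    ext i
    fin_cases i
    · have := hc.1; rw [hv0] at this; show A 0 = B 0; linarith
    · have := hc.2; rw [hv1] at this; show A 1 = B 1; linarith
  obtain ⟨nv, hnvdef⟩ : ∃ x : ℝ, x = v0 ^ 2 + v1 ^ 2 := ⟨_, rfl⟩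
  have hnv : (0:ℝ) < nv := by
    rw [hnvdef]
    rcases hv with h0 | h1
    · positivity
    · positivity
  obtain ⟨b, hbdef⟩ : ∃ x : ℝ, x = -(P 0 - A 0) * v1 + (P 1 - A 1) * v0 := ⟨_, rfl⟩
  obtain ⟨a, hadef⟩ : ∃ x : ℝ, x = ((P 0 - A 0) * v0 + (P 1 - A 1) * v1) / nv := ⟨_, rfl⟩
  have ha : a * nv = (P 0 - A 0) * v0 + (P 1 - A 1) * v1 := by
    rw [hadef]; field_simp
  rw [hnvdef, hv0, hv1] at ha
  have hPs : P ∉ affineSpan ℝ ({A, B} : Set (EuclideanSpace ℝ (Fin 2))) := by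
    intro hP
    exact h (by rw [hABP, collinear_insert_iff_of_mem_affineSpan hP]; exact collinear_pair ℝ A B)
  set Q : EuclideanSpace ℝ (Fin 2) := AffineMap.lineMap A B a with hQdef
  have hQmem : Q ∈ affineSpan ℝ ({A, B} : Set (EuclideanSpace ℝ (Fin 2))) :=
    AffineMap.lineMap_mem_affineSpan_pair a A B
  have hQ : Q = (1 - a) • A + a • B := AffineMap.lineMap_apply_module A B a
  have hQ0 : Q 0 = (1 - a) * A 0 + a * B 0 := by rw [hQ]; rfl
  have hQ1 : Q 1 = (1 - a) * A 1 + a * B 1 := by rw [hQ]; rfl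
  have key0 : (P 0 - Q 0) * nv = b * (-v1) := by
    rw [hQ0, hbdef, hnvdef, hv0, hv1]
    linear_combination (A 0 - B 0) * ha
  have key1 : (P 1 - Q 1) * nv = b * v0 := by
    rw [hQ1, hbdef, hnvdef, hv0, hv1]
    linear_combination (A 1 - B 1) * ha
  have hfoot0 : P 0 - Q 0 = (b / nv) * (-v1) := by
    rw [div_mul_eq_mul_div, eq_div_iff (ne_of_gt hnv)]; exact key0
  have hfoot1 : P 1 - Q 1 = (b / nv) * v0 := by
    rw [div_mul_eq_mul_div, eq_div_iff (ne_of_gt hnv)]; exact key1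
  have hb : b ≠ 0 := by
    intro hb0
    apply hPs
    have hPQ : P = Q := by
      ext i
      fin_cases i
      · have := hfoot0; rw [hb0] at this; simp at this
        show P 0 = Q 0; linarith
      · have := hfoot1; rw [hb0] at this; simp at this
        show P 1 = Q 1; linarith
    rw [hPQ]; exact hQmem
  obtain ⟨t, htdef⟩ : ∃ x : ℝ, x = if 0 < b then 1 else -1 := ⟨_, rfl⟩
  have ht2 : t ^ 2 = 1 := by rw [htdef]; split_ifs <;> norm_num
  obtain ⟨c, hcdef⟩ : ∃ x : ℝ, x = Real.sqrt 3 / 2 * t := ⟨_, rfl⟩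
  have hs3 : Real.sqrt 3 ^ 2 = 3 := Real.sq_sqrt (by norm_num)
  have hs3pos : 0 < Real.sqrt 3 := Real.sqrt_pos.2 (by norm_num)
  have hc2 : c ^ 2 = 3 / 4 := by
    rw [hcdef, mul_pow, ht2, div_pow, hs3]; norm_num
  have hcne : c ≠ 0 := by
    intro hc0; rw [hc0] at hc2; norm_num at hc2
  set C : EuclideanSpace ℝ (Fin 2) :=
    WithLp.toLp 2 ![(A 0 + B 0) / 2 - c * v1, (A 1 + B 1) / 2 + c * v0] with hCdef
  have hC0 : C 0 = (A 0 + B 0) / 2 - c * v1 := rfl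
  have hC1 : C 1 = (A 1 + B 1) / 2 + c * v0 := rfl
  set M : EuclideanSpace ℝ (Fin 2) := AffineMap.lineMap A B (1/2 : ℝ) with hMdef
  have hMmem : M ∈ affineSpan ℝ ({A, B} : Set (EuclideanSpace ℝ (Fin 2))) :=
    AffineMap.lineMap_mem_affineSpan_pair _ A B
  have hM : M = (1 - (1:ℝ)/2) • A + ((1:ℝ)/2) • B := AffineMap.lineMap_apply_module A B (1/2 : ℝ)
  have hM0 : M 0 = (1 - (1:ℝ)/2) * A 0 + (1/2) * B 0 := by rw [hM]; rfl
  have hM1 : M 1 = (1 - (1:ℝ)/2) * A 1 + (1/2) * B 1 := by rw [hM]; rfl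
  have hCM0 : C 0 - M 0 = c * (-v1) := by rw [hC0, hM0]; ring
  have hCM1 : C 1 - M 1 = c * v0 := by rw [hC1, hM1]; ring
  -- C is not on the line
  have hCs : C ∉ affineSpan ℝ ({A, B} : Set (EuclideanSpace ℝ (Fin 2))) := by
    intro hC
    have hd : C -ᵥ M ∈ (affineSpan ℝ ({A, B} : Set (EuclideanSpace ℝ (Fin 2)))).direction :=
      AffineSubspace.vsub_mem_direction hC hMmem
    rw [direction_affineSpan, vectorSpan_pair, Submodule.mem_span_singleton] at hd
    obtain ⟨r, hr⟩ := hd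
    have e0 : r * (A 0 - B 0) = C 0 - M 0 := congrArg (fun x : EuclideanSpace ℝ (Fin 2) => x 0) hr
    have e1 : r * (A 1 - B 1) = C 1 - M 1 := congrArg (fun x : EuclideanSpace ℝ (Fin 2) => x 1) hr
    rw [hCM0] at e0
    rw [hCM1] at e1
    rw [hv1] at e0
    rw [hv0] at e1
    have hz : c * nv = 0 := by
      rw [hnvdef, hv0, hv1]
      linear_combination (B 1 - A 1) * e0 - (B 0 - A 0) * e1
    rcases mul_eq_zero.1 hz with h' | h'
    · exact hcne h'
    · exact (ne_of_gt hnv) h'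
  refine ⟨C, ⟨⟨M, hMmem, Q, hQmem, ?_⟩, hCs, hPs⟩, ?_, ?_⟩
  · -- SameRay (C -ᵥ M) (P -ᵥ Q)
    have hCMv : C -ᵥ M = c • (WithLp.toLp 2 ![-v1, v0] : EuclideanSpace ℝ (Fin 2)) := by
      ext i
      fin_cases i
      · show C 0 - M 0 = c * (-v1); exact hCM0
      · show C 1 - M 1 = c * v0; exact hCM1
    have hPQv : P -ᵥ Q = (b / nv) • (WithLp.toLp 2 ![-v1, v0] : EuclideanSpace ℝ (Fin 2)) := by
      ext i
      fin_cases i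
      · show P 0 - Q 0 = (b / nv) * (-v1); exact hfoot0
      · show P 1 - Q 1 = (b / nv) * v0; exact hfoot1
    rw [hCMv, hPQv]
    rcases lt_or_ge 0 b with hbpos | hble
    · have ht1 : t = 1 := by rw [htdef, if_pos hbpos]
      have hcpos : 0 ≤ c := by rw [hcdef, ht1]; positivity
      have hdpos : 0 ≤ b / nv := le_of_lt (div_pos hbpos hnv)
      exact ((SameRay.refl _).nonneg_smul_left hcpos).nonneg_smul_right hdpos
    · have ht1 : t = -1 := by rw [htdef, if_neg (not_lt.2 hble)]
      have hbneg : b < 0 := lt_of_le_of_ne hble hb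
      have hc' : c = -(Real.sqrt 3 / 2) := by rw [hcdef, ht1]; ring
      have h1 : c • (WithLp.toLp 2 ![-v1, v0] : EuclideanSpace ℝ (Fin 2))
          = (Real.sqrt 3 / 2) • (-(WithLp.toLp 2 ![-v1, v0] : EuclideanSpace ℝ (Fin 2))) := by
        rw [hc', smul_neg, neg_smul]
      have h2 : (b / nv) • (WithLp.toLp 2 ![-v1, v0] : EuclideanSpace ℝ (Fin 2))
          = (-(b / nv)) • (-(WithLp.toLp 2 ![-v1, v0] : EuclideanSpace ℝ (Fin 2))) := by
        rw [smul_neg, neg_smul, neg_neg]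
      rw [h1, h2]
      have hd : 0 ≤ -(b / nv) := by
        have : b / nv < 0 := div_neg_of_neg_of_pos hbneg hnv
        linarith
      exact ((SameRay.refl _).nonneg_smul_left (by positivity)).nonneg_smul_right hd
  · -- dist A B = dist B C
    rw [dist_eq_norm, dist_eq_norm, EuclideanSpace.norm_eq, EuclideanSpace.norm_eq]
    congr 1
    rw [Fin.sum_univ_two, Fin.sum_univ_two]
    have e0 : (A - B) 0 = -v0 := by show A 0 - B 0 = -v0; rw [hv0]; ring
    have e1 : (A - B) 1 = -v1 := by show A 1 - B 1 = -v1; rw [hv1]; ring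
    have f0 : (B - C) 0 = v0 / 2 + c * v1 := by
      show B 0 - C 0 = _; rw [hC0, hv0]; ring
    have f1 : (B - C) 1 = v1 / 2 - c * v0 := by
      show B 1 - C 1 = _; rw [hC1, hv1]; ring
    rw [e0, e1, f0, f1]
    simp only [Real.norm_eq_abs, sq_abs]
    linear_combination (-(v0 ^ 2 + v1 ^ 2)) * hc2
  · -- dist B C = dist A C
    rw [dist_eq_norm, dist_eq_norm, EuclideanSpace.norm_eq, EuclideanSpace.norm_eq]
    congr 1
    rw [Fin.sum_univ_two, Fin.sum_univ_two]
    have f0 : (B - C) 0 = v0 / 2 + c * v1 := by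
      show B 0 - C 0 = _; rw [hC0, hv0]; ring
    have f1 : (B - C) 1 = v1 / 2 - c * v0 := by
      show B 1 - C 1 = _; rw [hC1, hv1]; ring
    have g0 : (A - C) 0 = -v0 / 2 + c * v1 := by
      show A 0 - C 0 = _; rw [hC0, hv0]; ring
    have g1 : (A - C) 1 = -v1 / 2 - c * v0 := by
      show A 1 - C 1 = _; rw [hC1, hv1]; ring
    rw [f0, f1, g0, g1]
    simp only [Real.norm_eq_abs, sq_abs]
    ring
end

section
/- (Angle transfer, Euclid I.23) Let A, O, B, A', O', B' be points in the Euclidean plane E := EuclideanSpace ℝ (Fin 2) with ¬ Collinear ℝ {A, O, B} and ¬ Collinear ℝ {A', O', B'}. Then there exists a point P such that P and B lie strictly on the same side of the line through O and A (i.e., (affineSpan ℝ {O, A}).SSameSide B P) and ∠ A O P = ∠ A' O' B'. -/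
open EuclideanGeometry

local notation "E" => EuclideanSpace ℝ (Fin 2)

lemma side_trichotomy (s : AffineSubspace ℝ E) {O : E} (hO : O ∈ s)
    (hdim : Module.finrank ℝ s.direction = 1) {B P : E} (hB : B ∉ s) (hP : P ∉ s) :
    s.SSameSide B P ∨ s.SOppSide B P := by
  set d := s.direction with hd
  haveI : FiniteDimensional ℝ (EuclideanSpace ℝ (Fin 2)) := by infer_instance
  have hdperp : Module.finrank ℝ dᗮ = 1 := by
    have h := Submodule.finrank_add_finrank_orthogonal (𝕜 := ℝ) d
    rw [hdim, finrank_euclideanSpace_fin] at h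
    omega
  set v : E := (B -ᵥ O) - (d.orthogonalProjectionOnto (B -ᵥ O) : E) with hv
  set w : E := (P -ᵥ O) - (d.orthogonalProjectionOnto (P -ᵥ O) : E) with hw
  have hvmem : v ∈ dᗮ := Submodule.sub_starProjection_mem_orthogonal _
  have hwmem : w ∈ dᗮ := Submodule.sub_starProjection_mem_orthogonal _
  have hv0 : v ≠ 0 := by
    intro h
    apply hB
    rw [← AffineSubspace.vsub_right_mem_direction_iff_mem hO]
    rw [sub_eq_zero] at h
    rw [h]
    exact (d.orthogonalProjectionOnto (B -ᵥ O)).2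
  have hw0 : w ≠ 0 := by
    intro h
    apply hP
    rw [← AffineSubspace.vsub_right_mem_direction_iff_mem hO]
    rw [sub_eq_zero] at h
    rw [h]
    exact (d.orthogonalProjectionOnto (P -ᵥ O)).2
  have hspan : Submodule.span ℝ {v} = dᗮ := by
    apply Submodule.eq_of_le_of_finrank_eq
    · rwa [Submodule.span_singleton_le_iff_mem]
    · rw [finrank_span_singleton hv0, hdperp]
  obtain ⟨c, hc⟩ : ∃ c : ℝ, c • v = w := by
    have : w ∈ Submodule.span ℝ {v} := hspan.symm ▸ hwmem
    exact Submodule.mem_span_singleton.mp this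
  have hc0 : c ≠ 0 := by
    rintro rfl
    rw [zero_smul] at hc
    exact hw0 hc.symm
  set p₁ : E := (d.orthogonalProjectionOnto (B -ᵥ O) : E) +ᵥ O with hp₁
  set p₂ : E := (d.orthogonalProjectionOnto (P -ᵥ O) : E) +ᵥ O with hp₂
  have hp₁s : p₁ ∈ s := AffineSubspace.vadd_mem_of_mem_direction (d.orthogonalProjectionOnto (B -ᵥ O)).2 hO
  have hp₂s : p₂ ∈ s := AffineSubspace.vadd_mem_of_mem_direction (d.orthogonalProjectionOnto (P -ᵥ O)).2 hO
  have hBv : B -ᵥ p₁ = v := by rw [hp₁, vsub_vadd_eq_vsub_sub, hv]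
  have hPw : P -ᵥ p₂ = w := by rw [hp₂, vsub_vadd_eq_vsub_sub, hw]
  rcases hc0.lt_or_gt with hneg | hpos
  · right
    refine ⟨⟨p₁, hp₁s, p₂, hp₂s, ?_⟩, hB, hP⟩
    rw [hBv, ← neg_vsub_eq_vsub_rev P p₂, hPw, ← hc, ← neg_smul]
    exact SameRay.sameRay_nonneg_smul_right v (by linarith)
  · left
    refine ⟨⟨p₁, hp₁s, p₂, hp₂s, ?_⟩, hB, hP⟩
    rw [hBv, hPw, ← hc]
    exact SameRay.sameRay_nonneg_smul_right v hpos.le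

lemma signType_aux : ∀ a b : SignType, a ≠ 0 → b ≠ 0 → a ≠ b → -a = b := by decide

lemma signType_neg_ne : ∀ a : SignType, a ≠ 0 → -a ≠ a := by decide

theorem angle_transfer
    (A O B A' O' B' : EuclideanSpace ℝ (Fin 2))
    (h₁ : ¬ Collinear ℝ ({A, O, B} : Set (EuclideanSpace ℝ (Fin 2))))
    (h₂ : ¬ Collinear ℝ ({A', O', B'} : Set (EuclideanSpace ℝ (Fin 2)))) :
    ∃ P : EuclideanSpace ℝ (Fin 2),
      (affineSpan ℝ ({O, A} : Set (EuclideanSpace ℝ (Fin 2)))).SSameSide B P ∧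
      ∠ A O P = ∠ A' O' B' := by
  classical
  haveI : Fact (Module.finrank ℝ E = 2) := ⟨finrank_euclideanSpace_fin⟩
  letI : Module.Oriented ℝ E (Fin 2) :=
    ⟨(EuclideanSpace.basisFun (Fin 2) ℝ).toBasis.orientation⟩
  set o : Orientation ℝ E (Fin 2) := Module.Oriented.positiveOrientation with ho
  have hAO : A ≠ O := by
    rintro rfl
    exact h₁ (by simpa using collinear_pair ℝ A B)
  have hsB : (∡ A O B).sign ≠ 0 := by
    rw [Ne, EuclideanGeometry.oangle_sign_eq_zero_iff_collinear]
    exact h₁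
  have hsB' : (∡ A' O' B').sign ≠ 0 := by
    rw [Ne, EuclideanGeometry.oangle_sign_eq_zero_iff_collinear]
    exact h₂
  set φ : Real.Angle :=
    if (∡ A' O' B').sign = (∡ A O B).sign then ∡ A' O' B' else -∡ A' O' B' with hφ
  have hφsign : φ.sign = (∡ A O B).sign := by
    by_cases h : (∡ A' O' B').sign = (∡ A O B).sign
    · rw [hφ, if_pos h, h]
    · rw [hφ, if_neg h, Real.Angle.sign_neg]
      exact signType_aux _ _ hsB' hsB h
  have hφne : φ.sign ≠ 0 := hφsign ▸ hsB
  have hu : A -ᵥ O ≠ 0 := vsub_ne_zero.mpr hAO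
  set P : E := o.rotation φ (A -ᵥ O) +ᵥ O with hP
  have hPO : P -ᵥ O = o.rotation φ (A -ᵥ O) := by rw [hP, vadd_vsub]
  have hoangle : ∡ A O P = φ := by
    rw [EuclideanGeometry.oangle, hPO]
    exact o.oangle_rotation_self_right hu φ
  have hAOPsign : (∡ A O P).sign ≠ 0 := by rw [hoangle]; exact hφne
  have hPneO : P ≠ O := EuclideanGeometry.right_ne_of_oangle_sign_ne_zero hAOPsign
  -- the unoriented angle equality
  have hangle : ∠ A O P = ∠ A' O' B' := by
    have hA'O' : A' ≠ O' := by
      rintro rfl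
      exact h₂ (by simpa using collinear_pair ℝ A' B')
    have hB'O' : B' ≠ O' := by
      rintro rfl
      exact h₂ (by simpa using collinear_pair ℝ A' B')
    rw [EuclideanGeometry.angle_eq_abs_oangle_toReal hAO hPneO,
      EuclideanGeometry.angle_eq_abs_oangle_toReal hA'O' hB'O', hoangle]
    by_cases h : (∡ A' O' B').sign = (∡ A O B).sign
    · rw [hφ, if_pos h]
    · rw [hφ, if_neg h]
      obtain ⟨hne0, hnepi⟩ := Real.Angle.sign_ne_zero_iff.mp hsB'
      have ht : (-∡ A' O' B').toReal = -(∡ A' O' B').toReal := by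
        have h1 : -∡ A' O' B' = ((-(∡ A' O' B').toReal : ℝ) : Real.Angle) := by
          rw [Real.Angle.coe_neg, Real.Angle.coe_toReal]
        rw [h1, Real.Angle.toReal_coe_eq_self_iff]
        constructor
        · have : (∡ A' O' B').toReal ≠ Real.pi := by
            rw [Ne, Real.Angle.toReal_eq_pi_iff]
            exact hnepi
          have h2 := Real.Angle.toReal_le_pi (∡ A' O' B')
          cases lt_or_eq_of_le h2 with
          | inl h3 => linarith
          | inr h3 => exact absurd h3 this
        · have := Real.Angle.neg_pi_lt_toReal (∡ A' O' B')
          linarith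
      rw [ht, abs_neg]
  -- same-side property
  have hO_mem : O ∈ affineSpan ℝ ({O, A} : Set E) :=
    mem_affineSpan ℝ (Set.mem_insert _ _)
  have hA_mem : A ∈ affineSpan ℝ ({O, A} : Set E) :=
    mem_affineSpan ℝ (Set.mem_insert_of_mem _ rfl)
  have hBnot : B ∉ affineSpan ℝ ({O, A} : Set E) := by
    intro hmem
    apply h₁
    have h4 : Collinear ℝ (insert B ({O, A} : Set E)) :=
      (collinear_insert_iff_of_mem_affineSpan hmem).2 (collinear_pair ℝ O A)
    have hset : ({A, O, B} : Set E) = insert B ({O, A} : Set E) := by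
      ext x; simp; tauto
    rw [hset]
    exact h4
  have hPnot : P ∉ affineSpan ℝ ({O, A} : Set E) := by
    intro hmem
    apply hAOPsign
    rw [Real.Angle.sign_eq_zero_iff,
      EuclideanGeometry.oangle_eq_zero_or_eq_pi_iff_collinear]
    have h4 : Collinear ℝ (insert P ({O, A} : Set E)) :=
      (collinear_insert_iff_of_mem_affineSpan hmem).2 (collinear_pair ℝ O A)
    have hset : ({A, O, P} : Set E) = insert P ({O, A} : Set E) := by
      ext x; simp; tauto
    rw [hset]
    exact h4
  have hdim : Module.finrank ℝ (affineSpan ℝ ({O, A} : Set E)).direction = 1 := by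
    rw [direction_affineSpan, vectorSpan_pair]
    exact finrank_span_singleton (vsub_ne_zero.mpr hAO.symm)
  rcases side_trichotomy _ hO_mem hdim hBnot hPnot with hside | hside
  · exact ⟨P, hside, hangle⟩
  · exfalso
    have h1 : (∡ A P O).sign = -(∡ A B O).sign :=
      hside.oangle_sign_eq_neg hA_mem hO_mem
    have h2 : (∡ A P O).sign = -(∡ A O P).sign :=
      (EuclideanGeometry.oangle_rotate_sign O A P).trans
        ((EuclideanGeometry.oangle_rotate_sign P O A).trans
          (EuclideanGeometry.oangle_swap₁₃_sign A O P).symm)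
    have h3 : (∡ A B O).sign = -(∡ A O B).sign :=
      (EuclideanGeometry.oangle_rotate_sign O A B).trans
        ((EuclideanGeometry.oangle_rotate_sign B O A).trans
          (EuclideanGeometry.oangle_swap₁₃_sign A O B).symm)
    rw [h2, h3, neg_neg] at h1
    have hEq : (∡ A O P).sign = (∡ A O B).sign := by rw [hoangle]; exact hφsign
    rw [hEq] at h1
    exact signType_neg_ne _ hsB h1
end
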